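/- Let Ω = (−απ/2, απ/2) × (−βπ/2, βπ/2) with α, β > 0. For a ∈ L^∞(∂Ω) set A_k(a) = ∫_{Σ₁∪Σ₃} a·sin²((k/β)(y + πβ/2)) dy (integral over the vertical sides) and B_n(a) = ∫_{Σ₂∪Σ₄} a·sin²((n/α)(x + πα/2)) dx (horizontal sides). Then inf over (n,k) ∈ ℕ*² of [ (n²/α²)·A_k(a) + (k²/β²)·B_n(a) ] / (n²/α² + k²/β²) equals min( inf_k A_k(a), inf_n B_n(a) ). -/
import Mathlib


open MeasureTheory Real Filter

private lemma stmt17_tendsto_aux (x c : ℝ) :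
    Tendsto (fun n : ℕ => x + c / ((n : ℝ) + 1) ^ 2) atTop (nhds x) := by
  have h1 : Tendsto (fun n : ℕ => ((n : ℝ) + 1) ^ 2) atTop atTop :=
    (tendsto_pow_atTop two_ne_zero).comp
      (tendsto_atTop_add_const_right _ 1 tendsto_natCast_atTop_atTop)
  have h2 : Tendsto (fun n : ℕ => c / ((n : ℝ) + 1) ^ 2) atTop (nhds 0) :=
    tendsto_const_nhds.div_atTop h1
  simpa using tendsto_const_nhds.add h2

private lemma stmt17_min_le_comb {x y l m : ℝ} (hl : 0 < l) (hm : 0 < m) :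
    min x y ≤ (l * x + m * y) / (l + m) := by
  rw [le_div_iff₀ (by linarith)]
  rcases le_total x y with h | h
  · rw [min_eq_left h]; nlinarith
  · rw [min_eq_right h]; nlinarith

private lemma stmt17_comb_le {l m x y M' : ℝ} (hl : 0 < l) (hm : 0 < m) (hM' : 0 ≤ M')
    (hy : y ≤ M') : (l * x + m * y) / (l + m) ≤ x + m * (M' + |x|) / l := by
  have h1 : x + m * (M' + |x|) / l = (x * l + m * (M' + |x|)) / l := by
    field_simp
  rw [h1, div_le_div_iff₀ (by linarith) hl]
  nlinarith [mul_le_mul_of_nonneg_left hy (mul_pos hl hm).le,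
    mul_le_mul_of_nonneg_left (neg_abs_le x) (mul_pos hl hm).le,
    mul_nonneg (mul_nonneg hm.le hm.le) (by positivity : (0:ℝ) ≤ M' + |x|)]

theorem stmt17 (α β : ℝ) (hα : 0 < α) (hβ : 0 < β)
    (a : ℝ × ℝ → ℝ) (ha : Measurable a) (hbd : ∃ C : ℝ, ∀ p, |a p| ≤ C)
    (A B : ℕ → ℝ)
    (hA : ∀ k : ℕ, A k = ∫ y in (-(β * π / 2))..(β * π / 2),
        (a (α * π / 2, y) + a (-(α * π / 2), y)) *
          Real.sin (((k : ℝ) / β) * (y + π * β / 2)) ^ 2)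
    (hB : ∀ n : ℕ, B n = ∫ x in (-(α * π / 2))..(α * π / 2),
        (a (x, β * π / 2) + a (x, -(β * π / 2))) *
          Real.sin (((n : ℝ) / α) * (x + π * α / 2)) ^ 2) :
    (⨅ p : ℕ+ × ℕ+,
        (((p.1 : ℝ) ^ 2 / α ^ 2) * A (p.2 : ℕ) + ((p.2 : ℝ) ^ 2 / β ^ 2) * B (p.1 : ℕ)) /
          ((p.1 : ℝ) ^ 2 / α ^ 2 + (p.2 : ℝ) ^ 2 / β ^ 2))
      = min (⨅ k : ℕ+, A (k : ℕ)) (⨅ n : ℕ+, B (n : ℕ)) := by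
  obtain ⟨C₀, hC₀⟩ := hbd
  set C : ℝ := max C₀ 0 with hCdef
  have hC : ∀ p, |a p| ≤ C := fun p => (hC₀ p).trans (le_max_left _ _)
  have hC0 : (0:ℝ) ≤ C := le_max_right _ _
  set M : ℝ := max (2 * C * (β * π)) (2 * C * (α * π)) with hMdef
  have hM0 : (0:ℝ) ≤ M := le_trans (by positivity) (le_max_left _ _)
  -- bounds on A and B
  have hAbd : ∀ k, |A k| ≤ M := by
    intro k
    rw [hA k]
    have hb : ∀ y ∈ Set.uIoc (-(β * π / 2)) (β * π / 2),
        ‖(a (α * π / 2, y) + a (-(α * π / 2), y)) *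
          Real.sin (((k : ℝ) / β) * (y + π * β / 2)) ^ 2‖ ≤ 2 * C := by
      intro y _
      rw [Real.norm_eq_abs, abs_mul]
      have h1 : |a (α * π / 2, y) + a (-(α * π / 2), y)| ≤ 2 * C := by
        calc |a (α * π / 2, y) + a (-(α * π / 2), y)|
            ≤ |a (α * π / 2, y)| + |a (-(α * π / 2), y)| := abs_add_le _ _
          _ ≤ 2 * C := by linarith [hC (α * π / 2, y), hC (-(α * π / 2), y)]
      have h2 : |Real.sin (((k : ℝ) / β) * (y + π * β / 2)) ^ 2| ≤ 1 := by
        rw [abs_of_nonneg (sq_nonneg _)]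
        exact Real.sin_sq_le_one _
      calc |a (α * π / 2, y) + a (-(α * π / 2), y)| *
            |Real.sin (((k : ℝ) / β) * (y + π * β / 2)) ^ 2|
          ≤ (2 * C) * 1 := mul_le_mul h1 h2 (abs_nonneg _) (by positivity)
        _ = 2 * C := by ring
    have h := intervalIntegral.norm_integral_le_of_norm_le_const hb
    rw [Real.norm_eq_abs] at h
    refine h.trans ?_
    have heq : |β * π / 2 - -(β * π / 2)| = β * π := by
      have : β * π / 2 - -(β * π / 2) = β * π := by ring
      rw [this, abs_of_nonneg (by positivity)]
    rw [heq]
    exact le_max_left _ _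
  have hBbd : ∀ n, |B n| ≤ M := by
    intro n
    rw [hB n]
    have hb : ∀ x ∈ Set.uIoc (-(α * π / 2)) (α * π / 2),
        ‖(a (x, β * π / 2) + a (x, -(β * π / 2))) *
          Real.sin (((n : ℝ) / α) * (x + π * α / 2)) ^ 2‖ ≤ 2 * C := by
      intro x _
      rw [Real.norm_eq_abs, abs_mul]
      have h1 : |a (x, β * π / 2) + a (x, -(β * π / 2))| ≤ 2 * C := by
        calc |a (x, β * π / 2) + a (x, -(β * π / 2))|
            ≤ |a (x, β * π / 2)| + |a (x, -(β * π / 2))| := abs_add_le _ _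
          _ ≤ 2 * C := by linarith [hC (x, β * π / 2), hC (x, -(β * π / 2))]
      have h2 : |Real.sin (((n : ℝ) / α) * (x + π * α / 2)) ^ 2| ≤ 1 := by
        rw [abs_of_nonneg (sq_nonneg _)]
        exact Real.sin_sq_le_one _
      calc |a (x, β * π / 2) + a (x, -(β * π / 2))| *
            |Real.sin (((n : ℝ) / α) * (x + π * α / 2)) ^ 2|
          ≤ (2 * C) * 1 := mul_le_mul h1 h2 (abs_nonneg _) (by positivity)
        _ = 2 * C := by ring
    have h := intervalIntegral.norm_integral_le_of_norm_le_const hb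
    rw [Real.norm_eq_abs] at h
    refine h.trans ?_
    have heq : |α * π / 2 - -(α * π / 2)| = α * π := by
      have : α * π / 2 - -(α * π / 2) = α * π := by ring
      rw [this, abs_of_nonneg (by positivity)]
    rw [heq]
    exact le_max_right _ _
  -- positivity of the weights
  have hl : ∀ q : ℕ+, (0:ℝ) < (q : ℝ) ^ 2 / α ^ 2 := by
    intro q
    have : (0:ℝ) < (q:ℝ) := by exact_mod_cast q.pos
    exact div_pos (pow_pos this 2) (pow_pos hα 2)
  have hm : ∀ q : ℕ+, (0:ℝ) < (q : ℝ) ^ 2 / β ^ 2 := by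
    intro q
    have : (0:ℝ) < (q:ℝ) := by exact_mod_cast q.pos
    exact div_pos (pow_pos this 2) (pow_pos hβ 2)
  set Q : ℕ+ × ℕ+ → ℝ := fun p =>
    (((p.1 : ℝ) ^ 2 / α ^ 2) * A (p.2 : ℕ) + ((p.2 : ℝ) ^ 2 / β ^ 2) * B (p.1 : ℕ)) /
      ((p.1 : ℝ) ^ 2 / α ^ 2 + (p.2 : ℝ) ^ 2 / β ^ 2) with hQdef
  have hQlb : ∀ p : ℕ+ × ℕ+, min (A (p.2 : ℕ)) (B (p.1 : ℕ)) ≤ Q p := fun p =>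
    stmt17_min_le_comb (hl p.1) (hm p.2)
  have hbddA : BddBelow (Set.range fun k : ℕ+ => A (k : ℕ)) := by
    refine ⟨-M, ?_⟩
    rintro _ ⟨k, rfl⟩
    linarith [(abs_le.mp (hAbd (k : ℕ))).1]
  have hbddB : BddBelow (Set.range fun n : ℕ+ => B (n : ℕ)) := by
    refine ⟨-M, ?_⟩
    rintro _ ⟨n, rfl⟩
    linarith [(abs_le.mp (hBbd (n : ℕ))).1]
  have hbddQ : BddBelow (Set.range Q) := by
    refine ⟨-M, ?_⟩
    rintro _ ⟨p, rfl⟩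
    refine le_trans ?_ (hQlb p)
    rcases le_total (A (p.2 : ℕ)) (B (p.1 : ℕ)) with h | h
    · rw [min_eq_left h]; linarith [(abs_le.mp (hAbd (p.2 : ℕ))).1]
    · rw [min_eq_right h]; linarith [(abs_le.mp (hBbd (p.1 : ℕ))).1]
  apply le_antisymm
  · apply le_min
    · -- inf over pairs ≤ inf A
      apply le_ciInf
      intro k
      set c : ℝ := ((k : ℝ) ^ 2 / β ^ 2) * (M + |A (k : ℕ)|) * α ^ 2 with hcdef
      apply ge_of_tendsto' (stmt17_tendsto_aux (A (k : ℕ)) c)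
      intro n
      set np : ℕ+ := ⟨n + 1, Nat.succ_pos n⟩ with hnp
      have hcast : ((np : ℝ)) = (n : ℝ) + 1 := by
        have : ((np : ℕ) : ℝ) = ((n + 1 : ℕ) : ℝ) := by norm_cast
        push_cast at this ⊢
        exact this
      have step1 : (⨅ p : ℕ+ × ℕ+, Q p) ≤ Q (np, k) := ciInf_le hbddQ (np, k)
      refine step1.trans ?_
      have hln : (0:ℝ) < ((n : ℝ) + 1) ^ 2 / α ^ 2 :=
        div_pos (by positivity) (pow_pos hα 2)
      have hkey := stmt17_comb_le (l := ((n : ℝ) + 1) ^ 2 / α ^ 2)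
        (m := (k : ℝ) ^ 2 / β ^ 2) (x := A (k : ℕ)) (y := B (np : ℕ))
        (M' := M) hln (hm k) hM0 (abs_le.mp (hBbd (np : ℕ))).2
      have hQeq : Q (np, k) = ((((n : ℝ) + 1) ^ 2 / α ^ 2) * A (k : ℕ) +
          ((k : ℝ) ^ 2 / β ^ 2) * B (np : ℕ)) /
          (((n : ℝ) + 1) ^ 2 / α ^ 2 + (k : ℝ) ^ 2 / β ^ 2) := by
        rw [hQdef]
        simp only [hcast]
      rw [hQeq]
      refine hkey.trans (le_of_eq ?_)
      have hα2 : (α:ℝ) ^ 2 ≠ 0 := by positivity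
      have hn2 : ((n:ℝ) + 1) ^ 2 ≠ 0 := by positivity
      rw [hcdef]
      field_simp
    · -- inf over pairs ≤ inf B
      apply le_ciInf
      intro n
      set c : ℝ := ((n : ℝ) ^ 2 / α ^ 2) * (M + |B (n : ℕ)|) * β ^ 2 with hcdef
      apply ge_of_tendsto' (stmt17_tendsto_aux (B (n : ℕ)) c)
      intro k
      set kp : ℕ+ := ⟨k + 1, Nat.succ_pos k⟩ with hkp
      have hcast : ((kp : ℝ)) = (k : ℝ) + 1 := by
        have : ((kp : ℕ) : ℝ) = ((k + 1 : ℕ) : ℝ) := by norm_cast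
        push_cast at this ⊢
        exact this
      have step1 : (⨅ p : ℕ+ × ℕ+, Q p) ≤ Q (n, kp) := ciInf_le hbddQ (n, kp)
      refine step1.trans ?_
      have hmk : (0:ℝ) < ((k : ℝ) + 1) ^ 2 / β ^ 2 :=
        div_pos (by positivity) (pow_pos hβ 2)
      have hkey := stmt17_comb_le (l := ((k : ℝ) + 1) ^ 2 / β ^ 2)
        (m := (n : ℝ) ^ 2 / α ^ 2) (x := B (n : ℕ)) (y := A (kp : ℕ))
        (M' := M) hmk (hl n) hM0 (abs_le.mp (hAbd (kp : ℕ))).2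
      have hQeq : Q (n, kp) = ((((k : ℝ) + 1) ^ 2 / β ^ 2) * B (n : ℕ) +
          ((n : ℝ) ^ 2 / α ^ 2) * A (kp : ℕ)) /
          (((k : ℝ) + 1) ^ 2 / β ^ 2 + (n : ℝ) ^ 2 / α ^ 2) := by
        rw [hQdef]
        simp only [hcast]
        ring_nf
      rw [hQeq]
      refine hkey.trans (le_of_eq ?_)
      have hβ2 : (β:ℝ) ^ 2 ≠ 0 := by positivity
      have hk2 : ((k:ℝ) + 1) ^ 2 ≠ 0 := by positivity
      rw [hcdef]
      field_simp
  · -- min of infs ≤ inf over pairs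
    apply le_ciInf
    intro p
    exact le_trans (min_le_min (ciInf_le hbddA p.2) (ciInf_le hbddB p.1)) (hQlb p)
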